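/- (Theorem 3, randomization at level 3) Let π ∈ (0,1) be such that πM is an integer, let w ∈ {0,1}^M have exactly (1−π)M coordinates equal to 1, and let z = w ⊗ 1_{KL} ∈ ℝ^{MKL} (so z_{jkl} = w_j). Let ρc, ρt be nonzero real numbers, let P be the MKL×MKL diagonal matrix whose (j,k,l) diagonal entry is 1/ρc if z_{jkl} = 0 and 1/ρt if z_{jkl} = 1, and let X be the MKL×2 matrix with first column 1_{MKL} and second column z. Assume λ1, λ2, λ3, λ4 > 0 and define M1 = Xᵀ P² X and M0 = Xᵀ P R P X. Then M1 is invertible and the lower-right entry of the sandwich matrix M1^{−1} M0 M1^{−1} equals (λ3/(MKL)) · (ρc²/π + ρt²/(1−π)) + (λ4 − λ3)(ρc − ρt)²/(MKL), i.e., it coincides with the lower-right entry of (Xᵀ P R^{−1} P X)^{−1}. -/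

import Mathlib

open Matrix Polynomial Finset

noncomputable section

/-- Extended nested exchangeable correlation matrix: the ((j,k,l),(j',k',l')) entry equals
1 if (j,k,l)=(j',k',l'), `a0` if j=j', k=k', l≠l', `a1` if j=j', k≠k', and `a2` if j≠j'. -/
def Rmat (M K L : ℕ) (a0 a1 a2 : ℝ) :
    Matrix (Fin M × Fin K × Fin L) (Fin M × Fin K × Fin L) ℝ :=
  Matrix.of fun p q =>
    if p = q then 1
    else if p.1 = q.1 ∧ p.2.1 = q.2.1 then a0
    else if p.1 = q.1 then a1
    else a2

def lam1 (a0 : ℝ) : ℝ := 1 - a0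

def lam2 (L : ℕ) (a0 a1 : ℝ) : ℝ := 1 + ((L : ℝ) - 1) * a0 - (L : ℝ) * a1

def lam3 (K L : ℕ) (a0 a1 a2 : ℝ) : ℝ :=
  1 + ((L : ℝ) - 1) * a0 + (L : ℝ) * ((K : ℝ) - 1) * a1 - (L : ℝ) * (K : ℝ) * a2

def lam4 (M K L : ℕ) (a0 a1 a2 : ℝ) : ℝ :=
  1 + ((L : ℝ) - 1) * a0 + (L : ℝ) * ((K : ℝ) - 1) * a1
    + (L : ℝ) * (K : ℝ) * ((M : ℝ) - 1) * a2

namespace SWaux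

variable {M K L : ℕ}

/-- tensor-structured matrix -/
def tm (F : Matrix (Fin M) (Fin M) ℝ) (G : Matrix (Fin K) (Fin K) ℝ)
    (H : Matrix (Fin L) (Fin L) ℝ) :
    Matrix (Fin M × Fin K × Fin L) (Fin M × Fin K × Fin L) ℝ :=
  Matrix.of fun p q => F p.1 q.1 * G p.2.1 q.2.1 * H p.2.2 q.2.2

/-- all-ones matrix -/
def jm (n : ℕ) : Matrix (Fin n) (Fin n) ℝ := Matrix.of fun _ _ => 1

lemma tm_mul (F F' : Matrix (Fin M) (Fin M) ℝ) (G G' : Matrix (Fin K) (Fin K) ℝ)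
    (H H' : Matrix (Fin L) (Fin L) ℝ) :
    tm F G H * tm F' G' H' = tm (F * F') (G * G') (H * H') := by
  ext p q
  simp only [tm, Matrix.mul_apply, Matrix.of_apply, Fintype.sum_prod_type]
  conv_rhs => rw [Finset.sum_mul_sum]
  simp only [Finset.sum_mul, Finset.mul_sum]
  conv_lhs => enter [2, j]; rw [Finset.sum_comm]
  rw [Finset.sum_comm]
  apply Finset.sum_congr rfl; intros
  apply Finset.sum_congr rfl; intros
  apply Finset.sum_congr rfl; intros
  ring

lemma tm_one : tm (1 : Matrix (Fin M) (Fin M) ℝ) (1 : Matrix (Fin K) (Fin K) ℝ)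
    (1 : Matrix (Fin L) (Fin L) ℝ) = 1 := by
  ext p q
  simp only [tm, Matrix.of_apply, Matrix.one_apply, Prod.ext_iff]
  split_ifs <;> simp_all

lemma jm_mul_jm (n : ℕ) : jm n * jm n = (n : ℝ) • jm n := by
  ext p q; simp [jm, Matrix.mul_apply]

lemma one_mul_jm (n : ℕ) : (1 : Matrix (Fin n) (Fin n) ℝ) * jm n = jm n := one_mul _
lemma jm_mul_one (n : ℕ) : jm n * (1 : Matrix (Fin n) (Fin n) ℝ) = jm n := mul_one _

lemma tm_smul₁ (c : ℝ) (F G H) : tm (M := M) (K := K) (L := L) (c • F) G H = c • tm F G H := by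
  ext p q; simp [tm]; ring
lemma tm_smul₂ (c : ℝ) (F G H) : tm (M := M) (K := K) (L := L) F (c • G) H = c • tm F G H := by
  ext p q; simp [tm]; ring
lemma tm_smul₃ (c : ℝ) (F G H) : tm (M := M) (K := K) (L := L) F G (c • H) = c • tm F G H := by
  ext p q; simp [tm]; ring

def matA (M K L : ℕ) := tm (1 : Matrix (Fin M) (Fin M) ℝ) (1 : Matrix (Fin K) (Fin K) ℝ) (jm L)
def matB (M K L : ℕ) := tm (1 : Matrix (Fin M) (Fin M) ℝ) (jm K) (jm L)
def matC (M K L : ℕ) := tm (jm M) (jm K) (jm L)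

lemma matA_apply (p q) : matA M K L p q = if p.1 = q.1 ∧ p.2.1 = q.2.1 then 1 else 0 := by
  simp only [matA, tm, jm, Matrix.of_apply, Matrix.one_apply, mul_one]
  split_ifs <;> simp_all
lemma matB_apply (p q) : matB M K L p q = if p.1 = q.1 then 1 else 0 := by
  simp [matB, tm, jm, Matrix.one_apply]
lemma matC_apply (p q) : matC M K L p q = 1 := by simp [matC, tm, jm]

lemma hAA : matA M K L * matA M K L = (L : ℝ) • matA M K L := by
  rw [matA, tm_mul, one_mul, one_mul, jm_mul_jm, tm_smul₃]
lemma hAB : matA M K L * matB M K L = (L : ℝ) • matB M K L := by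
  rw [matA, matB, tm_mul, one_mul, one_mul_jm, jm_mul_jm, tm_smul₃]
lemma hBA : matB M K L * matA M K L = (L : ℝ) • matB M K L := by
  rw [matA, matB, tm_mul, one_mul, jm_mul_one, jm_mul_jm, tm_smul₃]
lemma hAC : matA M K L * matC M K L = (L : ℝ) • matC M K L := by
  rw [matA, matC, tm_mul, one_mul_jm, one_mul_jm, jm_mul_jm, tm_smul₃]
lemma hCA : matC M K L * matA M K L = (L : ℝ) • matC M K L := by
  rw [matA, matC, tm_mul, jm_mul_one, jm_mul_one, jm_mul_jm, tm_smul₃]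
lemma hBB : matB M K L * matB M K L = ((K : ℝ) * L) • matB M K L := by
  rw [matB, tm_mul, one_mul, jm_mul_jm, jm_mul_jm, tm_smul₂, tm_smul₃, smul_smul]
lemma hBC : matB M K L * matC M K L = ((K : ℝ) * L) • matC M K L := by
  rw [matB, matC, tm_mul, one_mul_jm, jm_mul_jm, jm_mul_jm, tm_smul₂, tm_smul₃, smul_smul]
lemma hCB : matC M K L * matB M K L = ((K : ℝ) * L) • matC M K L := by
  rw [matB, matC, tm_mul, jm_mul_one, jm_mul_jm, jm_mul_jm, tm_smul₂, tm_smul₃, smul_smul]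
lemma hCC : matC M K L * matC M K L = ((M : ℝ) * K * L) • matC M K L := by
  rw [matC, tm_mul, jm_mul_jm, jm_mul_jm, jm_mul_jm, tm_smul₁, tm_smul₂, tm_smul₃, smul_smul,
    smul_smul, mul_assoc]

lemma tm_mulVec (F G H) (g : Fin M → ℝ) :
    tm (M := M) (K := K) (L := L) F G H *ᵥ (fun p => g p.1) =
      fun p => (∑ j, F p.1 j * g j) * (∑ k, G p.2.1 k) * (∑ l, H p.2.2 l) := by
  funext p
  simp only [tm, Matrix.mulVec, dotProduct, Matrix.of_apply, Fintype.sum_prod_type]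
  conv_rhs => rw [Finset.sum_mul_sum]
  simp only [Finset.sum_mul, Finset.mul_sum]
  conv_lhs => enter [2, j]; rw [Finset.sum_comm]
  rw [Finset.sum_comm]
  apply Finset.sum_congr rfl; intros
  apply Finset.sum_congr rfl; intros
  apply Finset.sum_congr rfl; intros
  ring

lemma matA_mulVec (g : Fin M → ℝ) :
    matA M K L *ᵥ (fun p => g p.1) = fun p => (L : ℝ) * g p.1 := by
  rw [matA, tm_mulVec]
  funext p
  simp [jm, Matrix.one_apply, Finset.sum_ite_eq]
  ring
lemma matB_mulVec (g : Fin M → ℝ) :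
    matB M K L *ᵥ (fun p => g p.1) = fun p => ((K : ℝ) * L) * g p.1 := by
  rw [matB, tm_mulVec]
  funext p
  simp [jm, Matrix.one_apply, Finset.sum_ite_eq]
  ring
lemma matC_mulVec (g : Fin M → ℝ) :
    matC M K L *ᵥ (fun p => g p.1) = fun _ => ((K : ℝ) * L) * ∑ j, g j := by
  rw [matC, tm_mulVec]
  funext p
  simp [jm]
  ring
lemma sum_lift (f : Fin M → ℝ) :
    ∑ p : Fin M × Fin K × Fin L, f p.1 = (K : ℝ) * L * ∑ j, f j := by
  simp only [Fintype.sum_prod_type, Finset.sum_const, Finset.card_univ, Fintype.card_fin,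
    Fintype.card_prod, nsmul_eq_mul, Nat.cast_mul, Finset.mul_sum]

lemma Rmat_decomp (a0 a1 a2 : ℝ) :
    Rmat M K L a0 a1 a2
      = (1 - a0) • (1 : Matrix (Fin M × Fin K × Fin L) (Fin M × Fin K × Fin L) ℝ)
        + (a0 - a1) • matA M K L + (a1 - a2) • matB M K L + a2 • matC M K L := by
  ext p q
  simp only [Rmat, Matrix.add_apply, Matrix.smul_apply, Matrix.of_apply,
    Matrix.one_apply, matA_apply, matB_apply, matC_apply, smul_eq_mul]
  by_cases h : p = q
  · subst h; simp
  · by_cases h2 : p.1 = q.1 ∧ p.2.1 = q.2.1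
    · simp [h, h2]
    · by_cases h3 : p.1 = q.1
      · have h4 : ¬ p.2.1 = q.2.1 := fun hk => h2 ⟨h3, hk⟩
        simp [h, h2, h3, h4]
      · simp [h, h2, h3]

/-- explicit inverse of the nested exchangeable correlation matrix -/
def Smat (M K L : ℕ) (a0 a1 a2 : ℝ) :
    Matrix (Fin M × Fin K × Fin L) (Fin M × Fin K × Fin L) ℝ :=
  (lam1 a0)⁻¹ • (1 : Matrix (Fin M × Fin K × Fin L) (Fin M × Fin K × Fin L) ℝ)
    + (((lam2 L a0 a1)⁻¹ - (lam1 a0)⁻¹) / L) • matA M K L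
    + (((lam3 K L a0 a1 a2)⁻¹ - (lam2 L a0 a1)⁻¹) / ((K : ℝ) * L)) • matB M K L
    + (((lam4 M K L a0 a1 a2)⁻¹ - (lam3 K L a0 a1 a2)⁻¹) / ((M : ℝ) * K * L)) • matC M K L

set_option maxHeartbeats 1000000 in
lemma coeffOne (a0 : ℝ) (h1 : lam1 a0 ≠ 0) : (1 - a0) * (lam1 a0)⁻¹ = 1 := by
  rw [lam1] at h1 ⊢; field_simp

set_option maxHeartbeats 1000000 in
lemma coeffA' (L : ℕ) (a0 a1 : ℝ) (hL : (L : ℝ) ≠ 0)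
    (h1 : lam1 a0 ≠ 0) (h2 : lam2 L a0 a1 ≠ 0) :
    (1 - a0) * (((lam2 L a0 a1)⁻¹ - (lam1 a0)⁻¹) / L)
      + (a0 - a1) * (lam1 a0)⁻¹
      + (a0 - a1) * ((L : ℝ) * (((lam2 L a0 a1)⁻¹ - (lam1 a0)⁻¹) / L)) = 0 := by
  field_simp
  simp only [lam1, lam2]
  ring

set_option maxHeartbeats 1000000 in
lemma coeffB' (K L : ℕ) (a0 a1 a2 : ℝ) (hK : (K : ℝ) ≠ 0) (hL : (L : ℝ) ≠ 0)
    (h1 : lam1 a0 ≠ 0) (h2 : lam2 L a0 a1 ≠ 0) (h3 : lam3 K L a0 a1 a2 ≠ 0) :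
    (1 - a0) * (((lam3 K L a0 a1 a2)⁻¹ - (lam2 L a0 a1)⁻¹) / ((K : ℝ) * L))
      + (a0 - a1) * ((L : ℝ) * (((lam3 K L a0 a1 a2)⁻¹ - (lam2 L a0 a1)⁻¹) / ((K : ℝ) * L)))
      + (a1 - a2) * (lam1 a0)⁻¹
      + (a1 - a2) * ((L : ℝ) * (((lam2 L a0 a1)⁻¹ - (lam1 a0)⁻¹) / L))
      + (a1 - a2) * ((K : ℝ) * L * (((lam3 K L a0 a1 a2)⁻¹ - (lam2 L a0 a1)⁻¹) / ((K : ℝ) * L)))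
      = 0 := by
  field_simp
  simp only [lam1, lam2, lam3]
  ring

set_option maxHeartbeats 2000000 in
lemma coeffC' (M K L : ℕ) (a0 a1 a2 : ℝ) (hM : (M : ℝ) ≠ 0) (hK : (K : ℝ) ≠ 0)
    (hL : (L : ℝ) ≠ 0)
    (h1 : lam1 a0 ≠ 0) (h2 : lam2 L a0 a1 ≠ 0) (h3 : lam3 K L a0 a1 a2 ≠ 0)
    (h4 : lam4 M K L a0 a1 a2 ≠ 0) :
    (1 - a0) * (((lam4 M K L a0 a1 a2)⁻¹ - (lam3 K L a0 a1 a2)⁻¹) / ((M : ℝ) * K * L))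
      + (a0 - a1) * ((L : ℝ) *
          (((lam4 M K L a0 a1 a2)⁻¹ - (lam3 K L a0 a1 a2)⁻¹) / ((M : ℝ) * K * L)))
      + (a1 - a2) * ((K : ℝ) * L *
          (((lam4 M K L a0 a1 a2)⁻¹ - (lam3 K L a0 a1 a2)⁻¹) / ((M : ℝ) * K * L)))
      + a2 * (lam1 a0)⁻¹
      + a2 * ((L : ℝ) * (((lam2 L a0 a1)⁻¹ - (lam1 a0)⁻¹) / L))
      + a2 * ((K : ℝ) * L * (((lam3 K L a0 a1 a2)⁻¹ - (lam2 L a0 a1)⁻¹) / ((K : ℝ) * L)))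
      + a2 * ((M : ℝ) * K * L *
          (((lam4 M K L a0 a1 a2)⁻¹ - (lam3 K L a0 a1 a2)⁻¹) / ((M : ℝ) * K * L))) = 0 := by
  field_simp
  simp only [lam1, lam2, lam3, lam4]
  ring

set_option maxHeartbeats 1000000 in
lemma R_mul_S (a0 a1 a2 : ℝ) (hM : 2 ≤ M) (hK : 2 ≤ K) (hL : 2 ≤ L)
    (h1 : lam1 a0 ≠ 0) (h2 : lam2 L a0 a1 ≠ 0) (h3 : lam3 K L a0 a1 a2 ≠ 0)
    (h4 : lam4 M K L a0 a1 a2 ≠ 0) :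
    Rmat M K L a0 a1 a2 * Smat M K L a0 a1 a2 = 1 := by
  have hMne : (M : ℝ) ≠ 0 := Nat.cast_ne_zero.2 (by omega)
  have hKne : (K : ℝ) ≠ 0 := Nat.cast_ne_zero.2 (by omega)
  have hLne : (L : ℝ) ≠ 0 := Nat.cast_ne_zero.2 (by omega)
  have hcal : ∀ x1 x2 x3 x4 : ℝ, x1 = 1 → x2 = 0 → x3 = 0 → x4 = 0 →
      x1 • (1 : Matrix (Fin M × Fin K × Fin L) (Fin M × Fin K × Fin L) ℝ)
        + x2 • matA M K L + x3 • matB M K L + x4 • matC M K L = 1 := by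
    intro x1 x2 x3 x4 e1 e2 e3 e4
    rw [e1, e2, e3, e4]; simp
  set s1 := (lam1 a0)⁻¹ with hs1
  set s2 := ((lam2 L a0 a1)⁻¹ - (lam1 a0)⁻¹) / L with hs2
  set s3 := ((lam3 K L a0 a1 a2)⁻¹ - (lam2 L a0 a1)⁻¹) / ((K : ℝ) * L) with hs3
  set s4 := ((lam4 M K L a0 a1 a2)⁻¹ - (lam3 K L a0 a1 a2)⁻¹) / ((M : ℝ) * K * L) with hs4
  rw [Rmat_decomp, Smat]
  simp only [Matrix.add_mul, Matrix.mul_add, Matrix.smul_mul, Matrix.mul_smul, smul_smul,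
    Matrix.one_mul, Matrix.mul_one, hAA, hAB, hBA, hAC, hCA, hBB, hBC, hCB, hCC]
  calc _ = ((1 - a0) * s1) • (1 : Matrix (Fin M × Fin K × Fin L) (Fin M × Fin K × Fin L) ℝ)
        + ((1 - a0) * s2 + (a0 - a1) * s1 + (a0 - a1) * ((L : ℝ) * s2)) • matA M K L
        + ((1 - a0) * s3 + (a0 - a1) * ((L : ℝ) * s3) + (a1 - a2) * s1
            + (a1 - a2) * ((L : ℝ) * s2) + (a1 - a2) * ((K : ℝ) * L * s3)) • matB M K L
        + ((1 - a0) * s4 + (a0 - a1) * ((L : ℝ) * s4) + (a1 - a2) * ((K : ℝ) * L * s4)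
            + a2 * s1 + a2 * ((L : ℝ) * s2) + a2 * ((K : ℝ) * L * s3)
            + a2 * ((M : ℝ) * K * L * s4)) • matC M K L := by
        module
    _ = 1 := hcal _ _ _ _ (coeffOne a0 h1) (coeffA' L a0 a1 hLne h1 h2)
        (coeffB' K L a0 a1 a2 hKne hLne h1 h2 h3)
        (coeffC' M K L a0 a1 a2 hMne hKne hLne h1 h2 h3 h4)

lemma R_mulVec (a0 a1 a2 : ℝ) (g : Fin M → ℝ) :
    Rmat M K L a0 a1 a2 *ᵥ (fun p => g p.1)
      = fun p => lam3 K L a0 a1 a2 * g p.1 + (K : ℝ) * L * a2 * ∑ j, g j := by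
  rw [Rmat_decomp]
  simp only [Matrix.add_mulVec, Matrix.smul_mulVec, matA_mulVec, matB_mulVec,
    matC_mulVec, Matrix.one_mulVec]
  funext p
  simp only [Pi.add_apply, Pi.smul_apply, smul_eq_mul, lam3]
  ring

lemma S_mulVec (a0 a1 a2 : ℝ) (hM : 2 ≤ M) (hK : 2 ≤ K) (hL : 2 ≤ L)
    (h1 : lam1 a0 ≠ 0) (h2 : lam2 L a0 a1 ≠ 0) (g : Fin M → ℝ) :
    Smat M K L a0 a1 a2 *ᵥ (fun p => g p.1)
      = fun p => (lam3 K L a0 a1 a2)⁻¹ * g p.1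
          + ((lam4 M K L a0 a1 a2)⁻¹ - (lam3 K L a0 a1 a2)⁻¹) / M * ∑ j, g j := by
  have hMne : (M : ℝ) ≠ 0 := Nat.cast_ne_zero.2 (by omega)
  have hKne : (K : ℝ) ≠ 0 := Nat.cast_ne_zero.2 (by omega)
  have hLne : (L : ℝ) ≠ 0 := Nat.cast_ne_zero.2 (by omega)
  rw [Smat]
  simp only [Matrix.add_mulVec, Matrix.smul_mulVec, matA_mulVec, matB_mulVec,
    matC_mulVec, Matrix.one_mulVec]
  funext p
  simp only [Pi.add_apply, Pi.smul_apply, smul_eq_mul]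
  field_simp
  ring

lemma entry_eq (E : Matrix (Fin M × Fin K × Fin L) (Fin M × Fin K × Fin L) ℝ)
    (Y : Matrix (Fin M × Fin K × Fin L) (Fin 2) ℝ) (c : Fin 2 → Fin M → ℝ)
    (hY : ∀ p i, Y p i = c i p.1) (i i' : Fin 2) (T : Fin M → ℝ)
    (hT : E *ᵥ (fun p => c i' p.1) = fun p => T p.1) :
    (Yᵀ * E * Y) i i' = (K : ℝ) * L * ∑ j, c i j * T j := by
  have h1 : ∀ p, (E * Y) p i' = T p.1 := by
    intro p
    have h := congrFun hT p
    simp only [Matrix.mulVec, dotProduct] at h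
    rw [Matrix.mul_apply, ← h]
    exact Finset.sum_congr rfl fun q _ => by rw [hY]
  rw [Matrix.mul_assoc, Matrix.mul_apply]
  have h2 : ∀ p : Fin M × Fin K × Fin L,
      Yᵀ i p * (E * Y) p i' = c i p.1 * T p.1 := fun p => by
    rw [Matrix.transpose_apply, hY, h1]
  rw [Finset.sum_congr rfl fun p _ => h2 p]
  exact sum_lift (fun j => c i j * T j)

lemma key_sum {M : ℕ} (w : Fin M → ℝ) (hw : ∀ j, w j = 0 ∨ w j = 1)
    (F : Fin M → ℝ) (A B : ℝ) (hA : ∀ j, w j = 1 → F j = A) (hB : ∀ j, w j = 0 → F j = B) :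
    ∑ j, F j = ((Finset.univ.filter fun j => w j = 1).card : ℝ) * A
      + ((M : ℝ) - ((Finset.univ.filter fun j => w j = 1).card : ℝ)) * B := by
  classical
  rw [← Finset.sum_filter_add_sum_filter_not Finset.univ (fun j => w j = 1)]
  have e1 : ∑ j ∈ Finset.univ.filter (fun j => w j = 1), F j
      = ((Finset.univ.filter fun j => w j = 1).card : ℝ) * A := by
    rw [Finset.sum_congr rfl (fun j hj => hA j (Finset.mem_filter.1 hj).2)]
    simp [mul_comm]
  have e2 : ∑ j ∈ Finset.univ.filter (fun j => ¬ w j = 1), F j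
      = ((Finset.univ.filter fun j => ¬ w j = 1).card : ℝ) * B := by
    rw [Finset.sum_congr rfl (fun j hj => hB j
      ((hw j).resolve_right (Finset.mem_filter.1 hj).2))]
    simp [mul_comm]
  rw [e1, e2]
  have hcc := Finset.card_filter_add_card_filter_not
    (s := (Finset.univ : Finset (Fin M))) (p := fun j => w j = 1)
  have hle : (Finset.univ.filter fun j => w j = 1).card ≤ M := by
    simpa using Finset.card_filter_le Finset.univ (fun j => w j = 1)
  have : ((Finset.univ.filter fun j => ¬ w j = 1).card : ℝ)
      = (M : ℝ) - ((Finset.univ.filter fun j => w j = 1).card : ℝ) := by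
    simp only [Finset.card_univ, Fintype.card_fin] at hcc
    have : (Finset.univ.filter fun j => ¬ w j = 1).card
        = M - (Finset.univ.filter fun j => w j = 1).card := by omega
    rw [this, Nat.cast_sub hle]
  rw [this]


end SWaux

open SWaux

set_option maxHeartbeats 4000000 in
/-- Theorem 3, randomization at level 3. -/
theorem sandwich_variance_level3 (M K L : ℕ) (hM : 2 ≤ M) (hK : 2 ≤ K) (hL : 2 ≤ L)
    (a0 a1 a2 : ℝ) (π ρc ρt : ℝ)
    (hπ : π ∈ Set.Ioo (0 : ℝ) 1) (hρc : ρc ≠ 0) (hρt : ρt ≠ 0)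
    (w : Fin M → ℝ) (hw : ∀ j, w j = 0 ∨ w j = 1)
    (hcard : ((Finset.univ.filter fun j => w j = 1).card : ℝ) = (1 - π) * (M : ℝ))
    (h1 : 0 < lam1 a0) (h2 : 0 < lam2 L a0 a1)
    (h3 : 0 < lam3 K L a0 a1 a2) (h4 : 0 < lam4 M K L a0 a1 a2)
    (P : Matrix (Fin M × Fin K × Fin L) (Fin M × Fin K × Fin L) ℝ)
    (hP : P = Matrix.diagonal fun p => if w p.1 = 0 then 1 / ρc else 1 / ρt)
    (X : Matrix (Fin M × Fin K × Fin L) (Fin 2) ℝ)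
    (hX : X = Matrix.of fun p i => if i = 0 then 1 else w p.1)
    (M1 M0 : Matrix (Fin 2) (Fin 2) ℝ)
    (hM1 : M1 = Xᵀ * (P * P) * X)
    (hM0 : M0 = Xᵀ * P * Rmat M K L a0 a1 a2 * P * X) :
    IsUnit M1 ∧
    (M1⁻¹ * M0 * M1⁻¹) 1 1 = lam3 K L a0 a1 a2 / ((M : ℝ) * (K : ℝ) * (L : ℝ)) *
        (ρc ^ 2 / π + ρt ^ 2 / (1 - π))
      + (lam4 M K L a0 a1 a2 - lam3 K L a0 a1 a2) * (ρc - ρt) ^ 2 /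
        ((M : ℝ) * (K : ℝ) * (L : ℝ)) ∧
    (M1⁻¹ * M0 * M1⁻¹) 1 1 = (Xᵀ * P * (Rmat M K L a0 a1 a2)⁻¹ * P * X)⁻¹ 1 1 := by
  classical
  obtain ⟨hπ0, hπ1⟩ := hπ
  have hMne : (M : ℝ) ≠ 0 := Nat.cast_ne_zero.2 (by omega)
  have hKne : (K : ℝ) ≠ 0 := Nat.cast_ne_zero.2 (by omega)
  have hLne : (L : ℝ) ≠ 0 := Nat.cast_ne_zero.2 (by omega)
  have hπne : π ≠ 0 := ne_of_gt hπ0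
  have h1π : (1 : ℝ) - π ≠ 0 := ne_of_gt (by linarith)
  set dfun : Fin M → ℝ := fun j => if w j = 0 then 1 / ρc else 1 / ρt with hdf
  set cf : Fin 2 → Fin M → ℝ := fun i j => if i = 0 then dfun j else dfun j * w j with hcf
  set Y := P * X with hYdef
  have hY : ∀ (p : Fin M × Fin K × Fin L) (i : Fin 2), Y p i = cf i p.1 := by
    intro p i
    rw [hYdef, hP, hX, Matrix.diagonal_mul]
    by_cases h : i = 0 <;> simp [hcf, hdf, h]
  have hM1Y : M1 = Yᵀ * (1 : Matrix (Fin M × Fin K × Fin L) (Fin M × Fin K × Fin L) ℝ) * Y := by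
    rw [hM1, Matrix.mul_one, hYdef, Matrix.transpose_mul, hP, Matrix.diagonal_transpose]
    simp only [Matrix.mul_assoc]
  have hM0Y : M0 = Yᵀ * Rmat M K L a0 a1 a2 * Y := by
    rw [hM0, hYdef, Matrix.transpose_mul, hP, Matrix.diagonal_transpose]
    simp only [Matrix.mul_assoc]
  have hRinv : (Rmat M K L a0 a1 a2)⁻¹ = Smat M K L a0 a1 a2 :=
    Matrix.inv_eq_right_inv (R_mul_S a0 a1 a2 hM hK hL h1.ne' h2.ne' h3.ne' h4.ne')
  have hNY : Xᵀ * P * (Rmat M K L a0 a1 a2)⁻¹ * P * X = Yᵀ * Smat M K L a0 a1 a2 * Y := by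
    rw [hRinv, hYdef, Matrix.transpose_mul, hP, Matrix.diagonal_transpose]
    simp only [Matrix.mul_assoc]
  -- entry formulas
  have hM1E : ∀ i i', M1 i i' = (K : ℝ) * L * ∑ j, cf i j * cf i' j := by
    intro i i'
    rw [hM1Y]
    exact entry_eq (1 : Matrix (Fin M × Fin K × Fin L) (Fin M × Fin K × Fin L) ℝ) Y cf hY i i' (cf i') (Matrix.one_mulVec _)
  have hM0E : ∀ i i', M0 i i' = (K : ℝ) * L * ∑ j, cf i j *
      (lam3 K L a0 a1 a2 * cf i' j + (K : ℝ) * L * a2 * ∑ jj, cf i' jj) := by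
    intro i i'
    rw [hM0Y]
    exact entry_eq _ Y cf hY i i' _ (R_mulVec a0 a1 a2 (cf i'))
  have hNE : ∀ i i', (Xᵀ * P * (Rmat M K L a0 a1 a2)⁻¹ * P * X) i i'
      = (K : ℝ) * L * ∑ j, cf i j *
        ((lam3 K L a0 a1 a2)⁻¹ * cf i' j
          + ((lam4 M K L a0 a1 a2)⁻¹ - (lam3 K L a0 a1 a2)⁻¹) / M * ∑ jj, cf i' jj) := by
    intro i i'
    rw [hNY]
    exact entry_eq _ Y cf hY i i' _ (S_mulVec a0 a1 a2 hM hK hL h1.ne' h2.ne' (cf i'))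
  -- scalar values
  set tv := (1 - π) * (M : ℝ) with htv
  have htvne : tv ≠ 0 := mul_ne_zero h1π hMne
  have hnvne : (M : ℝ) - tv ≠ 0 := by
    rw [htv]
    intro h
    have h2 : (M : ℝ) - (1 - π) * M = π * M := by ring
    rw [h2] at h
    exact hπne ((mul_eq_zero.1 h).resolve_right hMne)
  set u := 1 / ρt with hu
  set v := 1 / ρc with hv
  have hune : u ≠ 0 := one_div_ne_zero hρt
  have hvne : v ≠ 0 := one_div_ne_zero hρc
  set bv : Fin 2 → ℝ := fun i => if i = 0 then v else 0 with hbv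
  have hcfA : ∀ (i : Fin 2) j, w j = 1 → cf i j = u := by
    intro i j h
    fin_cases i <;> norm_num [hcf, hdf, h]
  have hcfB : ∀ (i : Fin 2) j, w j = 0 → cf i j = bv i := by
    intro i j h
    fin_cases i <;> norm_num [hcf, hdf, hbv, h]
  have hGv : ∀ i, ∑ j, cf i j = tv * u + ((M : ℝ) - tv) * bv i := by
    intro i
    rw [key_sum w hw _ u (bv i) (hcfA i) (hcfB i), hcard]
  have hM1v : ∀ i i', M1 i i'
      = (K : ℝ) * L * (tv * (u * u) + ((M : ℝ) - tv) * (bv i * bv i')) := by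
    intro i i'
    rw [hM1E i i', key_sum w hw _ (u * u) (bv i * bv i')
      (fun j h => by rw [hcfA i j h, hcfA i' j h])
      (fun j h => by rw [hcfB i j h, hcfB i' j h]), hcard]
  have hM0v : ∀ i i', M0 i i'
      = (K : ℝ) * L * (tv * (u * (lam3 K L a0 a1 a2 * u
            + (K : ℝ) * L * a2 * (tv * u + ((M : ℝ) - tv) * bv i')))
        + ((M : ℝ) - tv) * (bv i * (lam3 K L a0 a1 a2 * bv i'
            + (K : ℝ) * L * a2 * (tv * u + ((M : ℝ) - tv) * bv i')))) := by
    intro i i'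
    rw [hM0E i i', key_sum w hw _ _ _
      (fun j h => by rw [hcfA i j h, hcfA i' j h, hGv i'])
      (fun j h => by rw [hcfB i j h, hcfB i' j h, hGv i']), hcard]
  have hNv : ∀ i i', (Xᵀ * P * (Rmat M K L a0 a1 a2)⁻¹ * P * X) i i'
      = (K : ℝ) * L * (tv * (u * ((lam3 K L a0 a1 a2)⁻¹ * u
            + ((lam4 M K L a0 a1 a2)⁻¹ - (lam3 K L a0 a1 a2)⁻¹) / M
              * (tv * u + ((M : ℝ) - tv) * bv i')))
        + ((M : ℝ) - tv) * (bv i * ((lam3 K L a0 a1 a2)⁻¹ * bv i'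
            + ((lam4 M K L a0 a1 a2)⁻¹ - (lam3 K L a0 a1 a2)⁻¹) / M
              * (tv * u + ((M : ℝ) - tv) * bv i')))) := by
    intro i i'
    rw [hNE i i', key_sum w hw _ _ _
      (fun j h => by rw [hcfA i j h, hcfA i' j h, hGv i'])
      (fun j h => by rw [hcfB i j h, hcfB i' j h, hGv i']), hcard]
  -- explicit inverse of M1
  set sb := ((M : ℝ) - tv) * (v * v) with hsb
  set bb := tv * (u * u) with hbb
  have hsbne : sb ≠ 0 := mul_ne_zero hnvne (mul_ne_zero hvne hvne)
  have hbbne : bb ≠ 0 := mul_ne_zero htvne (mul_ne_zero hune hune)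
  have hKLne : (K : ℝ) * L ≠ 0 := mul_ne_zero hKne hLne
  have hright : M1 * !![1 / ((K : ℝ) * L * sb), -(1 / ((K : ℝ) * L * sb));
      -(1 / ((K : ℝ) * L * sb)), 1 / ((K : ℝ) * L * sb) + 1 / ((K : ℝ) * L * bb)] = 1 := by
    ext i i'
    fin_cases i <;> fin_cases i' <;>
      simp only [Matrix.mul_apply, Fin.sum_univ_two, hM1v, hbv, Matrix.one_apply,
        Matrix.cons_val', Matrix.cons_val_zero, Matrix.cons_val_one, Matrix.head_cons,
        Matrix.head_fin_const, Matrix.empty_val'] <;>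
      norm_num <;> (try field_simp) <;> ring_nf <;> simp only [hsb] <;> ring
  have hM1inv : M1⁻¹ = !![1 / ((K : ℝ) * L * sb), -(1 / ((K : ℝ) * L * sb));
      -(1 / ((K : ℝ) * L * sb)), 1 / ((K : ℝ) * L * sb) + 1 / ((K : ℝ) * L * bb)] :=
    Matrix.inv_eq_right_inv hright
  have hUnit : IsUnit M1 := by
    have := invertibleOfRightInverse _ _ hright
    exact isUnit_of_invertible M1
  have h3' := h3.ne'
  have h4' := h4.ne'
  have hmain : (M1⁻¹ * M0 * M1⁻¹) 1 1 = lam3 K L a0 a1 a2 / ((M : ℝ) * (K : ℝ) * (L : ℝ)) *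
        (ρc ^ 2 / π + ρt ^ 2 / (1 - π))
      + (lam4 M K L a0 a1 a2 - lam3 K L a0 a1 a2) * (ρc - ρt) ^ 2 /
        ((M : ℝ) * (K : ℝ) * (L : ℝ)) := by
    rw [hM1inv]
    simp only [Matrix.mul_apply, Fin.sum_univ_two, hM0v, hbv]
    norm_num
    rw [htv, hsb, hbb, hu, hv]
    simp only [lam3, lam4]
    have h3'' := h3'
    have h4'' := h4'
    simp only [lam3, lam4] at h3'' h4''
    field_simp
    ring
  refine ⟨hUnit, hmain, ?_⟩
  rw [hmain]
  have hNmat : Xᵀ * P * (Rmat M K L a0 a1 a2)⁻¹ * P * X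
      = !![(K : ℝ) * L * (tv * (u * ((lam3 K L a0 a1 a2)⁻¹ * u + (((lam4 M K L a0 a1 a2)⁻¹ - (lam3 K L a0 a1 a2)⁻¹) / M) * (tv * u + ((M : ℝ) - tv) * v))) + ((M : ℝ) - tv) * (v * ((lam3 K L a0 a1 a2)⁻¹ * v + (((lam4 M K L a0 a1 a2)⁻¹ - (lam3 K L a0 a1 a2)⁻¹) / M) * (tv * u + ((M : ℝ) - tv) * v)))), (K : ℝ) * L * (tv * (u * ((lam3 K L a0 a1 a2)⁻¹ * u + (((lam4 M K L a0 a1 a2)⁻¹ - (lam3 K L a0 a1 a2)⁻¹) / M) * (tv * u + ((M : ℝ) - tv) * 0))) + ((M : ℝ) - tv) * (v * ((lam3 K L a0 a1 a2)⁻¹ * 0 + (((lam4 M K L a0 a1 a2)⁻¹ - (lam3 K L a0 a1 a2)⁻¹) / M) * (tv * u + ((M : ℝ) - tv) * 0)))); (K : ℝ) * L * (tv * (u * ((lam3 K L a0 a1 a2)⁻¹ * u + (((lam4 M K L a0 a1 a2)⁻¹ - (lam3 K L a0 a1 a2)⁻¹) / M) * (tv * u + ((M : ℝ) - tv) * v)))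 + ((M : ℝ) - tv) * (0 * ((lam3 K L a0 a1 a2)⁻¹ * v + (((lam4 M K L a0 a1 a2)⁻¹ - (lam3 K L a0 a1 a2)⁻¹) / M) * (tv * u + ((M : ℝ) - tv) * v)))), (K : ℝ) * L * (tv * (u * ((lam3 K L a0 a1 a2)⁻¹ * u + (((lam4 M K L a0 a1 a2)⁻¹ - (lam3 K L a0 a1 a2)⁻¹) / M) * (tv * u + ((M : ℝ) - tv) * 0))) + ((M : ℝ) - tv) * (0 * ((lam3 K L a0 a1 a2)⁻¹ * 0 + (((lam4 M K L a0 a1 a2)⁻¹ - (lam3 K L a0 a1 a2)⁻¹) / M) * (tv * u + ((M : ℝ) - tv) * 0))))] := by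
    ext i i'
    fin_cases i <;> fin_cases i' <;> rw [hNv] <;> norm_num [hbv]
  rw [hNmat, Matrix.inv_def, Matrix.adjugate_fin_two, Matrix.det_fin_two_of]
  simp only [Matrix.smul_apply, Ring.inverse_eq_inv', smul_eq_mul, Matrix.cons_val', Matrix.of_apply,
    Matrix.cons_val_zero, Matrix.cons_val_one, Matrix.head_cons, Matrix.head_fin_const,
    Matrix.empty_val']
  have hdet : ((K : ℝ) * L * (tv * (u * ((lam3 K L a0 a1 a2)⁻¹ * u + (((lam4 M K L a0 a1 a2)⁻¹ - (lam3 K L a0 a1 a2)⁻¹) / M) * (tv * u + ((M : ℝ) - tv) * v))) + ((M : ℝ) - tv) * (v * ((lam3 K L a0 a1 a2)⁻¹ * v + (((lam4 M K L a0 a1 a2)⁻¹ - (lam3 K L a0 a1 a2)⁻¹) / M) * (tv * u + ((M : ℝ) - tv) * v))))) * ((K : ℝ) * L * (tv * (u * ((lam3 K L a0 a1 a2)⁻¹ * u + (((lam4 M K L a0 a1 a2)⁻¹ - (lam3 K L a0 a1 a2)⁻¹) / M) * (tv * u + ((M : ℝ) - tv) * 0))) + ((M : ℝ) - tv) * (0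 * ((lam3 K L a0 a1 a2)⁻¹ * 0 + (((lam4 M K L a0 a1 a2)⁻¹ - (lam3 K L a0 a1 a2)⁻¹) / M) * (tv * u + ((M : ℝ) - tv) * 0))))) - ((K : ℝ) * L * (tv * (u * ((lam3 K L a0 a1 a2)⁻¹ * u + (((lam4 M K L a0 a1 a2)⁻¹ - (lam3 K L a0 a1 a2)⁻¹) / M) * (tv * u + ((M : ℝ) - tv) * 0))) + ((M : ℝ) - tv) * (v * ((lam3 K L a0 a1 a2)⁻¹ * 0 + (((lam4 M K L a0 a1 a2)⁻¹ - (lam3 K L a0 a1 a2)⁻¹) / M) * (tv * u + ((M : ℝ) - tv) * 0))))) * ((K : ℝ) * L * (tv * (u * ((lam3 K L a0 a1 a2)⁻¹ * u + (((lam4 M K L a0 a1 a2)⁻¹ - (lam3 K L a0 a1 a2)⁻¹) / M) * (tv * u + ((M : ℝ) - tv) * v))) + ((M : ℝ) - tv) * (0 * ((lam3 K L a0 a1 a2)⁻¹ * v + (((lam4 M K L a0 a1 a2)⁻¹ - (lam3 K L a0 a1 a2)⁻¹) / M) * (tv * u + ((M : ℝ) - tv) * v)))))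
      = ((K : ℝ) * L) ^ 2 * (((M : ℝ) - tv) * (v * v)) * (tv * (u * u))
          * ((lam3 K L a0 a1 a2)⁻¹ * (lam4 M K L a0 a1 a2)⁻¹) := by
    field_simp
    ring
  rw [hdet]
  have hrel : lam4 M K L a0 a1 a2 = lam3 K L a0 a1 a2 + (M : ℝ) * K * L * a2 := by
    simp only [lam3, lam4]; ring
  have h4r : lam3 K L a0 a1 a2 + (M : ℝ) * K * L * a2 ≠ 0 := by
    rw [← hrel]; exact h4'
  rw [hrel, htv, hu, hv]
  have h1mπ : (1 : ℝ) - (1 - π) ≠ 0 := by rw [sub_sub_cancel]; exact hπne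
  field_simp
  ring
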